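/- Let x be a quasispecies solution for the sharp peak fitness function on E = 𝒜^ℓ with mean fitness λ, and for 0 ≤ k ≤ ℓ let 𝒬(k) = Σ_{u : d(u,w*) = k} x(u) be the total proportion of genotypes at Hamming distance k from the wild type. Then 𝒬(k) = Σ_{n≥1} ((λ−1)/λⁿ) · C(ℓ,k) · ((1−ρⁿ)·(κ−1)/κ)^k · (ρⁿ + (1−ρⁿ)/κ)^{ℓ−k}. -/

import Mathlib

open scoped BigOperators

open Finset


noncomputable def qsKer (c r : ℝ) {A : Type*} [DecidableEq A] (a b : A) : ℝ :=
  if a = b then r else c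

lemma qsKer_prod {A : Type*} [DecidableEq A] {ℓ : ℕ} (c r : ℝ) (u v : Fin ℓ → A) :
    (∏ i, qsKer c r (u i) (v i)) = c ^ hammingDist u v * r ^ (ℓ - hammingDist u v) := by
  unfold qsKer
  rw [Finset.prod_ite]
  simp only [Finset.prod_const]
  have h1 : (Finset.univ.filter fun i => ¬ u i = v i).card = hammingDist u v := rfl
  have h2 : (Finset.univ.filter fun i => u i = v i).card = ℓ - hammingDist u v := by
    have := Finset.card_filter_add_card_filter_not (s := (Finset.univ : Finset (Fin ℓ)))
      (p := fun i => u i = v i)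
    simp only [Finset.card_univ, Fintype.card_fin] at this
    omega
  rw [h1, h2, mul_comm]


lemma qsKer_chapman {A : Type*} [Fintype A] [DecidableEq A] {κ : ℕ}
    (hκ : Fintype.card A = κ) (hκ2 : 2 ≤ κ) (ρ s : ℝ) (a b : A) :
    (∑ y : A, qsKer ((1-ρ)/κ) (ρ+(1-ρ)/κ) a y * qsKer ((1-s)/κ) (s+(1-s)/κ) y b)
      = qsKer ((1-ρ*s)/κ) (ρ*s+(1-ρ*s)/κ) a b := by
  have hκ0 : (κ : ℝ) ≠ 0 := by positivity
  set C1 : ℝ := (1-ρ)/κ with hC1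
  set R1 : ℝ := ρ+(1-ρ)/κ with hR1
  set C2 : ℝ := (1-s)/κ with hC2
  set R2 : ℝ := s+(1-s)/κ with hR2
  by_cases hab : a = b
  · subst hab
    have hfun : ∀ y : A, qsKer C1 R1 a y * qsKer C2 R2 y a
        = C1*C2 + (if y = a then R1*R2 - C1*C2 else 0) := by
      intro y
      rcases eq_or_ne y a with h | h
      · subst h; simp [qsKer]
      · simp [qsKer, h, h.symm]
    rw [Finset.sum_congr rfl (fun y _ => hfun y), Finset.sum_add_distrib,
      Finset.sum_const, Finset.sum_ite_eq' Finset.univ a, if_pos (Finset.mem_univ a),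
      Finset.card_univ, hκ]
    simp only [qsKer, if_pos rfl, ↓reduceIte, hC1, hR1, hC2, hR2, nsmul_eq_mul]
    field_simp
    ring
  · have hfun : ∀ y : A, qsKer C1 R1 a y * qsKer C2 R2 y b
        = C1*C2 + ((if y = a then R1*C2 - C1*C2 else 0)
            + (if y = b then C1*R2 - C1*C2 else 0)) := by
      intro y
      rcases eq_or_ne y a with h | h
      · subst h
        simp [qsKer, hab, Ne.symm hab]
      · rcases eq_or_ne y b with h2 | h2
        · subst h2; simp [qsKer, h, Ne.symm h]
        · simp [qsKer, h, Ne.symm h, h2, Ne.symm h2]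
    rw [Finset.sum_congr rfl (fun y _ => hfun y), Finset.sum_add_distrib,
      Finset.sum_add_distrib, Finset.sum_const,
      Finset.sum_ite_eq' Finset.univ a, if_pos (Finset.mem_univ a),
      Finset.sum_ite_eq' Finset.univ b, if_pos (Finset.mem_univ b),
      Finset.card_univ, hκ]
    simp only [qsKer, if_neg hab, hC1, hR1, hC2, hR2, nsmul_eq_mul]
    field_simp
    ring


lemma hammingDist_eq_sum {A : Type*} [DecidableEq A] {n : ℕ} (u v : Fin n → A) :
    hammingDist u v = ∑ i, if u i = v i then 0 else 1 := by
  rw [hammingDist, Finset.card_filter]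
  exact Finset.sum_congr rfl fun i _ => by by_cases h : u i = v i <;> simp [h]

lemma hammingDist_cons {A : Type*} [DecidableEq A] {n : ℕ} (a : A) (t : Fin n → A)
    (w : Fin (n+1) → A) :
    hammingDist (Fin.cons a t) w = (if a = w 0 then 0 else 1) + hammingDist t (Fin.tail w) := by
  rw [hammingDist_eq_sum, hammingDist_eq_sum, Fin.sum_univ_succ]
  simp [Fin.tail]
  congr

lemma card_hamming_sphere {A : Type*} [Fintype A] [DecidableEq A] :
    ∀ (n : ℕ) (w : Fin n → A) (k : ℕ),
    (Finset.univ.filter fun u : Fin n → A => hammingDist u w = k).card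
      = n.choose k * (Fintype.card A - 1) ^ k := by
  intro n
  induction n with
  | zero =>
    intro w k
    match k with
    | 0 => simp [hammingDist]
    | k+1 => simp [hammingDist]
  | succ n ih =>
    intro w k
    have key : (Finset.univ.filter fun u : Fin (n+1) → A => hammingDist u w = k).card
        = ∑ a : A, ∑ t : Fin n → A,
            if (if a = w 0 then 0 else 1) + hammingDist t (Fin.tail w) = k then 1 else 0 := by
      rw [Finset.card_filter]
      rw [← (Fin.consEquiv (fun _ : Fin (n+1) => A)).sum_comp
        (fun u => if hammingDist u w = k then 1 else 0)]
      rw [Fintype.sum_prod_type]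
      refine Finset.sum_congr rfl fun a _ => Finset.sum_congr rfl fun t _ => ?_
      rw [show (Fin.consEquiv (fun _ : Fin (n+1) => A)) (a, t) = Fin.cons a t from rfl,
        hammingDist_cons]
    have hsplit : ∀ (X Y : ℕ), (∑ a : A, if a = w 0 then X else Y)
        = X + (Fintype.card A - 1) * Y := by
      intro X Y
      rw [Finset.sum_ite, Finset.sum_const, Finset.sum_const]
      have h1 : (Finset.univ.filter fun a : A => a = w 0) = {w 0} := by
        rw [Finset.filter_eq']; simp
      have h2 : (Finset.univ.filter fun a : A => ¬a = w 0) = Finset.univ.erase (w 0) := by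
        ext a; simp [and_comm]
      rw [h1, h2, Finset.card_erase_of_mem (Finset.mem_univ _), Finset.card_singleton,
        Finset.card_univ]
      simp [mul_comm]
    match k with
    | 0 =>
      rw [key]
      have inner : ∀ a : A, (∑ t : Fin n → A,
          if (if a = w 0 then 0 else 1) + hammingDist t (Fin.tail w) = 0 then 1 else 0)
          = if a = w 0 then n.choose 0 * (Fintype.card A - 1) ^ 0 else 0 := by
        intro a
        split_ifs with h
        · simp only [zero_add]; rw [← Finset.card_filter, ih]
        · simp
      rw [Finset.sum_congr rfl fun a _ => inner a, hsplit]
      simp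
    | k'+1 =>
      rw [key]
      have inner : ∀ a : A, (∑ t : Fin n → A,
          if (if a = w 0 then 0 else 1) + hammingDist t (Fin.tail w) = k'+1 then 1 else 0)
          = if a = w 0 then n.choose (k'+1) * (Fintype.card A - 1) ^ (k'+1)
            else n.choose k' * (Fintype.card A - 1) ^ k' := by
        intro a
        split_ifs with h
        · simp only [zero_add]; rw [← Finset.card_filter, ih]
        · have : ∀ t : Fin n → A, (1 + hammingDist t (Fin.tail w) = k'+1)
              ↔ (hammingDist t (Fin.tail w) = k') := by intro t; omega
          simp only [this]
          rw [← Finset.card_filter, ih]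
      rw [Finset.sum_congr rfl fun a _ => inner a, hsplit, Nat.choose_succ_succ]
      ring


noncomputable def qsK (ρ : ℝ) (κ : ℕ) {A : Type*} [Fintype A] [DecidableEq A] {ℓ : ℕ}
    (n : ℕ) (v u : Fin ℓ → A) : ℝ :=
  ∏ i, qsKer ((1-ρ^n)/κ) (ρ^n + (1-ρ^n)/κ) (v i) (u i)

lemma qsK_chapman {A : Type*} [Fintype A] [DecidableEq A] {κ ℓ : ℕ}
    (hκ : Fintype.card A = κ) (hκ2 : 2 ≤ κ) (ρ : ℝ) (n : ℕ) (v u : Fin ℓ → A) :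
    (∑ w : Fin ℓ → A, qsK ρ κ 1 v w * qsK ρ κ n w u) = qsK ρ κ (n+1) v u := by
  unfold qsK
  have e1 : ∀ w : Fin ℓ → A,
      (∏ i, qsKer ((1-ρ^1)/κ) (ρ^1+(1-ρ^1)/κ) (v i) (w i)) *
        (∏ i, qsKer ((1-ρ^n)/κ) (ρ^n+(1-ρ^n)/κ) (w i) (u i))
      = ∏ i, (qsKer ((1-ρ^1)/κ) (ρ^1+(1-ρ^1)/κ) (v i) (w i) *
          qsKer ((1-ρ^n)/κ) (ρ^n+(1-ρ^n)/κ) (w i) (u i)) := fun w =>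
    (Finset.prod_mul_distrib).symm
  rw [Finset.sum_congr rfl fun w _ => e1 w]
  have e2 := Finset.prod_univ_sum (fun _ : Fin ℓ => (Finset.univ : Finset A))
    (fun i a => qsKer ((1-ρ^1)/κ) (ρ^1+(1-ρ^1)/κ) (v i) a *
      qsKer ((1-ρ^n)/κ) (ρ^n+(1-ρ^n)/κ) a (u i))
  rw [Fintype.piFinset_univ] at e2
  rw [← e2]
  refine Finset.prod_congr rfl fun i _ => ?_
  simpa [pow_one, pow_succ'] using qsKer_chapman hκ hκ2 ρ (ρ^n) (v i) (u i)


lemma qsK_nonneg {A : Type*} [Fintype A] [DecidableEq A] {κ ℓ : ℕ} (hκ2 : 2 ≤ κ)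
    {ρ : ℝ} (hρ0 : 0 ≤ ρ) (hρ1 : ρ ≤ 1) (n : ℕ) (v u : Fin ℓ → A) :
    0 ≤ qsK ρ κ n v u := by
  have hκ0 : (0:ℝ) < κ := by
    have : (2:ℝ) ≤ κ := by exact_mod_cast hκ2
    linarith
  have h1 : ρ ^ n ≤ 1 := pow_le_one₀ hρ0 hρ1
  have h0 : 0 ≤ ρ ^ n := pow_nonneg hρ0 n
  have hc : 0 ≤ (1 - ρ^n)/(κ:ℝ) := div_nonneg (by linarith) hκ0.le
  have hr : 0 ≤ ρ^n + (1 - ρ^n)/(κ:ℝ) := add_nonneg h0 hc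
  refine Finset.prod_nonneg fun i _ => ?_
  unfold qsKer
  split_ifs <;> assumption

lemma qsK_le_one {A : Type*} [Fintype A] [DecidableEq A] {κ ℓ : ℕ} (hκ2 : 2 ≤ κ)
    {ρ : ℝ} (hρ0 : 0 ≤ ρ) (hρ1 : ρ ≤ 1) (n : ℕ) (v u : Fin ℓ → A) :
    qsK ρ κ n v u ≤ 1 := by
  have hκ1 : (1:ℝ) ≤ κ := by
    have : (2:ℝ) ≤ κ := by exact_mod_cast hκ2
    linarith
  have h1 : ρ ^ n ≤ 1 := pow_le_one₀ hρ0 hρ1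
  have h0 : 0 ≤ ρ ^ n := pow_nonneg hρ0 n
  have hc : 0 ≤ (1 - ρ^n)/(κ:ℝ) := div_nonneg (by linarith) (by linarith)
  have hr : 0 ≤ ρ^n + (1 - ρ^n)/(κ:ℝ) := add_nonneg h0 hc
  refine Finset.prod_le_one (fun i _ => ?_) (fun i _ => ?_)
  · unfold qsKer; split_ifs <;> assumption
  · unfold qsKer
    have hd : (1 - ρ^n)/κ ≤ 1 - ρ^n := div_le_self (by linarith) hκ1
    split_ifs
    · linarith
    · rw [div_le_one (by linarith)]; linarith

set_option maxHeartbeats 1000000 in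
theorem quasispecies_hamming_class_series
    (A : Type*) [Fintype A] [DecidableEq A] (κ ℓ : ℕ)
    (hκ : Fintype.card A = κ) (hκ2 : 2 ≤ κ) (hℓ : 1 ≤ ℓ)
    (q : ℝ) (hq0 : 0 < q) (hq1 : q < ((κ : ℝ) - 1) / κ)
    (ρ : ℝ) (hρ : ρ = 1 - κ * q / ((κ : ℝ) - 1))
    (σ : ℝ) (hσ : 1 < σ) (wstar : Fin ℓ → A)
    (f : (Fin ℓ → A) → ℝ) (hf : ∀ u, f u = if u = wstar then σ else 1)
    (M : Matrix (Fin ℓ → A) (Fin ℓ → A) ℝ)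
    (hM : ∀ u v, M u v =
      (q / ((κ : ℝ) - 1)) ^ hammingDist u v * (1 - q) ^ (ℓ - hammingDist u v))
    (x : (Fin ℓ → A) → ℝ) (hx0 : ∀ u, 0 ≤ x u) (hx1 : ∑ u, x u = 1)
    (hqs : ∀ u, x u * (∑ v, x v * f v) = ∑ v, x v * f v * M v u)
    (lam : ℝ) (hlam : lam = ∑ v, x v * f v)
    (k : ℕ) (hk : k ≤ ℓ) :
    (∑ u ∈ Finset.univ.filter (fun u => hammingDist u wstar = k), x u) =
      ∑' n : ℕ,
        ((lam - 1) / lam ^ (n + 1)) * (Nat.choose ℓ k : ℝ) *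
          ((1 - ρ ^ (n + 1)) * ((κ : ℝ) - 1) / κ) ^ k *
          (ρ ^ (n + 1) + (1 - ρ ^ (n + 1)) / κ) ^ (ℓ - k) := by
  -- numeric basics
  have hκR : (2:ℝ) ≤ (κ:ℝ) := by exact_mod_cast hκ2
  have hκ0 : (0:ℝ) < κ := by linarith
  have hκm1 : (0:ℝ) < (κ:ℝ) - 1 := by linarith
  have hqκ : q * κ < (κ:ℝ) - 1 := by
    rw [← lt_div_iff₀ hκ0]; exact hq1
  have hq1' : q < 1 := by nlinarith
  have hρ0 : 0 < ρ := by
    rw [hρ]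
    have : κ * q / ((κ:ℝ)-1) < 1 := by
      rw [div_lt_one hκm1]; nlinarith
    linarith
  have hρ1 : ρ < 1 := by
    rw [hρ]
    have : 0 < κ * q / ((κ:ℝ)-1) := by positivity
    linarith
  -- kernel identification
  have hc1 : (1 - ρ^1)/(κ:ℝ) = q/((κ:ℝ)-1) := by
    rw [pow_one, hρ]; field_simp; ring
  have hr1 : ρ^1 + (1 - ρ^1)/(κ:ℝ) = 1 - q := by
    rw [pow_one, hρ]; field_simp; ring
  have hM1 : ∀ v u : Fin ℓ → A, M v u = qsK ρ κ 1 v u := by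
    intro v u
    rw [hM, qsK, qsKer_prod, hr1, hc1]
  -- wild type mass and mean fitness
  have hf1 : ∀ v, 1 ≤ f v := by
    intro v; rw [hf]; split_ifs <;> linarith
  have hlam1 : lam = 1 + (σ-1) * x wstar := by
    rw [hlam]
    have e : ∀ v : Fin ℓ → A, x v * f v = x v + (if v = wstar then (σ-1) * x v else 0) := by
      intro v; rw [hf]; split_ifs <;> ring
    rw [Finset.sum_congr rfl fun v _ => e v, Finset.sum_add_distrib, hx1,
      Finset.sum_ite_eq' Finset.univ wstar, if_pos (Finset.mem_univ _)]
  have hMpos : ∀ v u : Fin ℓ → A, 0 < M v u := by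
    intro v u; rw [hM]
    have h1 : 0 < q / ((κ:ℝ)-1) := by positivity
    have h2 : 0 < 1 - q := by linarith
    positivity
  have hlamge1 : 1 ≤ lam := by
    rw [hlam1]; nlinarith [hx0 wstar]
  have hxw : 0 < x wstar := by
    have h := hqs wstar
    rw [← hlam] at h
    have hpos : 0 < ∑ v, x v * f v * M v wstar := by
      obtain ⟨v0, hv0⟩ : ∃ v, 0 < x v := by
        by_contra hc
        push_neg at hc
        have : ∑ u, x u = 0 :=
          Finset.sum_eq_zero fun u _ => le_antisymm (hc u) (hx0 u)
        rw [hx1] at this; norm_num at this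
      refine Finset.sum_pos' (fun v _ => ?_) ⟨v0, Finset.mem_univ _, ?_⟩
      · have := hf1 v
        have := (hMpos v wstar).le
        have := hx0 v
        positivity
      · have h1 := hf1 v0
        have h2 := hMpos v0 wstar
        have h3 : 0 < x v0 * f v0 := mul_pos hv0 (lt_of_lt_of_le zero_lt_one h1)
        exact mul_pos h3 h2
    have hxlam : 0 < x wstar * lam := by rw [h]; exact hpos
    nlinarith [hxlam, hlamge1]
  have hlamgt1 : 1 < lam := by rw [hlam1]; nlinarith
  have hlampos : 0 < lam := by linarith
  have hlamne : lam ≠ 0 := ne_of_gt hlampos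
  -- recursion
  have hrec : ∀ u, x u = (1/lam) * (∑ v, x v * M v u) + ((lam-1)/lam) * M wstar u := by
    intro u
    have h := hqs u
    rw [← hlam] at h
    have hsum : (∑ v, x v * f v * M v u)
        = (∑ v, x v * M v u) + (lam - 1) * M wstar u := by
      have e : ∀ v : Fin ℓ → A, x v * f v * M v u
          = x v * M v u + (if v = wstar then (σ-1) * x v * M v u else 0) := by
        intro v; rw [hf]; split_ifs <;> ring
      rw [Finset.sum_congr rfl fun v _ => e v, Finset.sum_add_distrib,
        Finset.sum_ite_eq' Finset.univ wstar, if_pos (Finset.mem_univ _)]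
      have : lam - 1 = (σ-1) * x wstar := by rw [hlam1]; ring
      rw [this]
      try ring
    rw [hsum] at h
    field_simp
    linarith [h]
  -- one-step identity for weighted sums
  have hstep : ∀ (N : ℕ) (u : Fin ℓ → A), (∑ v, x v * qsK ρ κ N v u)
      = (1/lam) * (∑ w, x w * qsK ρ κ (N+1) w u)
        + ((lam-1)/lam) * qsK ρ κ (N+1) wstar u := by
    intro N u
    have e1 : ∀ v : Fin ℓ → A, x v * qsK ρ κ N v u
        = (1/lam) * (∑ w, x w * (M w v * qsK ρ κ N v u))
          + ((lam-1)/lam) * (M wstar v * qsK ρ κ N v u) := by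
      intro v
      rw [show (∑ w, x w * (M w v * qsK ρ κ N v u))
          = (∑ w, x w * M w v) * qsK ρ κ N v u by
        rw [Finset.sum_mul]; exact Finset.sum_congr rfl fun w _ => by ring]
      rw [hrec v]; ring
    rw [Finset.sum_congr rfl fun v _ => e1 v, Finset.sum_add_distrib]
    congr 1
    · rw [← Finset.mul_sum]
      congr 1
      rw [Finset.sum_comm]
      refine Finset.sum_congr rfl fun w _ => ?_
      rw [← Finset.mul_sum]
      congr 1
      rw [← qsK_chapman hκ hκ2 ρ N w u]
      exact Finset.sum_congr rfl fun v _ => by rw [hM1]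
    · rw [← Finset.mul_sum]
      congr 1
      rw [← qsK_chapman hκ hκ2 ρ N wstar u]
      exact Finset.sum_congr rfl fun v _ => by rw [hM1]
  -- K 0 is the identity
  have hK0 : ∀ v u : Fin ℓ → A, qsK ρ κ 0 v u = if v = u then 1 else 0 := by
    intro v u
    unfold qsK qsKer
    simp only [pow_zero, sub_self, zero_div, zero_add, add_zero]
    rw [Finset.prod_boole]
    simp [funext_iff]
  -- telescoping identity
  have htel : ∀ (N : ℕ) (u : Fin ℓ → A), x u
      = (∑ n ∈ Finset.range N, ((lam-1)/lam^(n+1)) * qsK ρ κ (n+1) wstar u)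
        + (1/lam^N) * ∑ v, x v * qsK ρ κ N v u := by
    intro N
    induction N with
    | zero =>
      intro u
      simp only [Finset.range_zero, Finset.sum_empty, pow_zero, zero_add, one_div, inv_one,
        one_mul]
      rw [Finset.sum_congr rfl fun v _ => by rw [hK0 v u]]
      rw [Finset.sum_congr rfl (fun v (_ : v ∈ Finset.univ) =>
        show x v * (if v = u then 1 else 0) = if v = u then x v else 0 by split_ifs <;> ring)]
      rw [Finset.sum_ite_eq' Finset.univ u, if_pos (Finset.mem_univ _)]
    | succ N ih =>
      intro u
      rw [ih u, hstep N u, Finset.sum_range_succ]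
      have : (1:ℝ)/lam^N * ((1/lam) * (∑ w, x w * qsK ρ κ (N+1) w u)
          + ((lam-1)/lam) * qsK ρ κ (N+1) wstar u)
          = ((lam-1)/lam^(N+1)) * qsK ρ κ (N+1) wstar u
            + (1/lam^(N+1)) * ∑ v, x v * qsK ρ κ (N+1) v u := by
        rw [pow_succ]
        field_simp
        ring
      rw [this]; ring
  -- the Hamming class
  set cls := Finset.univ.filter (fun u : Fin ℓ → A => hammingDist u wstar = k) with hcls
  have h1κ : 1 ≤ κ := le_trans one_le_two hκ2
  have hcard : (cls.card : ℝ) = (ℓ.choose k : ℝ) * ((κ:ℝ)-1)^k := by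
    rw [hcls, card_hamming_sphere ℓ wstar k, hκ, Nat.cast_mul, Nat.cast_pow,
      Nat.cast_sub h1κ, Nat.cast_one]
  have hKw : ∀ (n : ℕ) (u : Fin ℓ → A), u ∈ cls →
      qsK ρ κ n wstar u = ((1-ρ^n)/κ)^k * (ρ^n + (1-ρ^n)/κ)^(ℓ-k) := by
    intro n u hu
    rw [qsK, qsKer_prod]
    have hd : hammingDist wstar u = k := by
      rw [hammingDist_comm]
      exact (Finset.mem_filter.mp hu).2
    rw [hd]
  have hS : ∀ n : ℕ, (∑ u ∈ cls, qsK ρ κ n wstar u)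
      = (cls.card:ℝ) * (((1-ρ^n)/κ)^k * (ρ^n + (1-ρ^n)/κ)^(ℓ-k)) := by
    intro n
    rw [Finset.sum_congr rfl (fun u hu => hKw n u hu), Finset.sum_const, nsmul_eq_mul]
  have hterm : ∀ n : ℕ, ((lam-1)/lam^(n+1)) * ∑ u ∈ cls, qsK ρ κ (n+1) wstar u
      = ((lam - 1) / lam ^ (n + 1)) * (Nat.choose ℓ k : ℝ) *
          ((1 - ρ ^ (n + 1)) * ((κ : ℝ) - 1) / κ) ^ k *
          (ρ ^ (n + 1) + (1 - ρ ^ (n + 1)) / κ) ^ (ℓ - k) := by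
    intro n
    rw [hS, hcard,
      show ((1 - ρ^(n+1)) * ((κ:ℝ)-1)/κ)^k = (((κ:ℝ)-1)^k * ((1-ρ^(n+1))/κ)^k) from by
        rw [← mul_pow]; congr 1; ring]
    ring
  have hpartial : ∀ N : ℕ,
      (∑ n ∈ Finset.range N, ((lam - 1) / lam ^ (n + 1)) * (Nat.choose ℓ k : ℝ) *
          ((1 - ρ ^ (n + 1)) * ((κ : ℝ) - 1) / κ) ^ k *
          (ρ ^ (n + 1) + (1 - ρ ^ (n + 1)) / κ) ^ (ℓ - k))
      = (∑ u ∈ cls, x u) - (1/lam^N) * ∑ u ∈ cls, ∑ v, x v * qsK ρ κ N v u := by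
    intro N
    have h1 : (∑ u ∈ cls, x u)
        = (∑ u ∈ cls, ∑ n ∈ Finset.range N, ((lam-1)/lam^(n+1)) * qsK ρ κ (n+1) wstar u)
          + ∑ u ∈ cls, (1/lam^N) * ∑ v, x v * qsK ρ κ N v u := by
      rw [← Finset.sum_add_distrib]
      exact Finset.sum_congr rfl fun u _ => htel N u
    rw [Finset.sum_comm, ← Finset.mul_sum] at h1
    have h2 : (∑ n ∈ Finset.range N, ∑ u ∈ cls, ((lam-1)/lam^(n+1)) * qsK ρ κ (n+1) wstar u)
        = ∑ n ∈ Finset.range N, ((lam - 1) / lam ^ (n + 1)) * (Nat.choose ℓ k : ℝ) *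
          ((1 - ρ ^ (n + 1)) * ((κ : ℝ) - 1) / κ) ^ k *
          (ρ ^ (n + 1) + (1 - ρ ^ (n + 1)) / κ) ^ (ℓ - k) := by
      refine Finset.sum_congr rfl fun n _ => ?_
      rw [← Finset.mul_sum]
      exact hterm n
    rw [h2] at h1
    linarith [h1]
  have hrem_nonneg : ∀ N : ℕ, 0 ≤ (1/lam^N) * ∑ u ∈ cls, ∑ v, x v * qsK ρ κ N v u := by
    intro N
    have h0 : 0 ≤ ∑ u ∈ cls, ∑ v, x v * qsK ρ κ N v u :=
      Finset.sum_nonneg fun u _ => Finset.sum_nonneg fun v _ =>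
        mul_nonneg (hx0 v) (qsK_nonneg hκ2 hρ0.le hρ1.le N v u)
    exact mul_nonneg (by positivity) h0
  have hrem_le : ∀ N : ℕ, (1/lam^N) * (∑ u ∈ cls, ∑ v, x v * qsK ρ κ N v u)
      ≤ (cls.card:ℝ) * (1/lam)^N := by
    intro N
    have hinner : ∀ u : Fin ℓ → A, (∑ v, x v * qsK ρ κ N v u) ≤ 1 := by
      intro u
      calc (∑ v, x v * qsK ρ κ N v u) ≤ ∑ v, x v * 1 :=
            Finset.sum_le_sum fun v _ =>
              mul_le_mul_of_nonneg_left (qsK_le_one hκ2 hρ0.le hρ1.le N v u) (hx0 v)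
        _ = 1 := by simp [hx1]
    have hc : (∑ u ∈ cls, ∑ v, x v * qsK ρ κ N v u) ≤ (cls.card:ℝ) := by
      calc (∑ u ∈ cls, ∑ v, x v * qsK ρ κ N v u) ≤ ∑ _u ∈ cls, (1:ℝ) :=
            Finset.sum_le_sum fun u _ => hinner u
        _ = (cls.card:ℝ) := by rw [Finset.sum_const, nsmul_eq_mul, mul_one]
    calc (1/lam^N) * (∑ u ∈ cls, ∑ v, x v * qsK ρ κ N v u)
        ≤ (1/lam^N) * (cls.card:ℝ) := by
          refine mul_le_mul_of_nonneg_left hc (by positivity)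
      _ = (cls.card:ℝ) * (1/lam)^N := by rw [div_pow, one_pow]; ring
  have hlim : Filter.Tendsto (fun N : ℕ => (cls.card:ℝ) * (1/lam)^N)
      Filter.atTop (nhds 0) := by
    have h := (tendsto_pow_atTop_nhds_zero_of_lt_one
      (le_of_lt (by positivity : (0:ℝ) < 1/lam))
      ((div_lt_one hlampos).mpr hlamgt1)).const_mul (cls.card:ℝ)
    simpa using h
  have hremlim : Filter.Tendsto
      (fun N : ℕ => (1/lam^N) * ∑ u ∈ cls, ∑ v, x v * qsK ρ κ N v u)
      Filter.atTop (nhds 0) :=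
    squeeze_zero hrem_nonneg hrem_le hlim
  have htends : Filter.Tendsto
      (fun N : ℕ => ∑ n ∈ Finset.range N,
        ((lam - 1) / lam ^ (n + 1)) * (Nat.choose ℓ k : ℝ) *
          ((1 - ρ ^ (n + 1)) * ((κ : ℝ) - 1) / κ) ^ k *
          (ρ ^ (n + 1) + (1 - ρ ^ (n + 1)) / κ) ^ (ℓ - k))
      Filter.atTop (nhds (∑ u ∈ cls, x u)) := by
    rw [funext hpartial]
    simpa using (tendsto_const_nhds (x := ∑ u ∈ cls, x u)
      (f := Filter.atTop (α := ℕ))).sub hremlim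
  have hnonneg : ∀ n : ℕ, 0 ≤ ((lam - 1) / lam ^ (n + 1)) * (Nat.choose ℓ k : ℝ) *
          ((1 - ρ ^ (n + 1)) * ((κ : ℝ) - 1) / κ) ^ k *
          (ρ ^ (n + 1) + (1 - ρ ^ (n + 1)) / κ) ^ (ℓ - k) := by
    intro n
    rw [← hterm n]
    refine mul_nonneg (div_nonneg (by linarith) (by positivity)) ?_
    exact Finset.sum_nonneg fun u _ => qsK_nonneg hκ2 hρ0.le hρ1.le (n+1) wstar u
  have hsummable : Summable (fun n : ℕ =>
      ((lam - 1) / lam ^ (n + 1)) * (Nat.choose ℓ k : ℝ) *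
          ((1 - ρ ^ (n + 1)) * ((κ : ℝ) - 1) / κ) ^ k *
          (ρ ^ (n + 1) + (1 - ρ ^ (n + 1)) / κ) ^ (ℓ - k)) := by
    refine summable_of_sum_range_le (c := ∑ u ∈ cls, x u) hnonneg (fun N => ?_)
    rw [hpartial N]
    linarith [hrem_nonneg N]
  have hhs : HasSum (fun n : ℕ =>
      ((lam - 1) / lam ^ (n + 1)) * (Nat.choose ℓ k : ℝ) *
          ((1 - ρ ^ (n + 1)) * ((κ : ℝ) - 1) / κ) ^ k *
          (ρ ^ (n + 1) + (1 - ρ ^ (n + 1)) / κ) ^ (ℓ - k)) (∑ u ∈ cls, x u) :=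
    (Summable.hasSum_iff_tendsto_nat hsummable).mpr htends
  exact hhs.tsum_eq.symm
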